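/- Let λ > 0 and let f : (0,∞) → ℝ be a generalized Stieltjes function of order λ. Then for each x > 0 the sequence (c_n)_{n≥0} defined by c_n = (−1)^n (Γ(λ)/Γ(n+λ)) x^n f^{(n)}(x) is a Hausdorff moment sequence: there exists a finite nonnegative Borel measure ν_x on [0,1] with c_n = ∫_{[0,1]} u^n dν_x(u) for all n ≥ 0. -/

import Mathlib

open MeasureTheory Set Filter

/-- `f` is a generalized Stieltjes function of order `λ`. -/
def IsGenStieltjes (lam : ℝ) (f : ℝ → ℝ) : Prop :=
  ∃ (C : ℝ) (ρ : Measure ℝ), 0 ≤ C ∧ ρ (Set.Iio 0) = 0 ∧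
    (∀ x > (0 : ℝ), Integrable (fun t => (x + t) ^ (-lam)) ρ) ∧
    ∀ x > (0 : ℝ), f x = C + ∫ t, (x + t) ^ (-lam) ∂ρ

open scoped NNReal ENNReal

section Aux

variable {lam : ℝ} {ρ : Measure ℝ}

lemma stmt14_meas (x p : ℝ) : Measurable (fun t : ℝ => (x + t) ^ p) := by
  have h1 : Measurable (fun y : ℝ => y ^ p) := by measurability
  exact h1.comp (measurable_const.add measurable_id)

lemma stmt14_ae (hρ0 : ρ (Set.Iio 0) = 0) : ∀ᵐ t ∂ρ, 0 ≤ t := by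
  filter_upwards [measure_eq_zero_iff_ae_notMem.1 hρ0] with t ht
  simpa [Set.mem_Iio, not_lt] using ht

/-- integrability of `(x+t)^(-lam-s)` for `s ≥ 0` -/
lemma stmt14_int (hρ0 : ρ (Set.Iio 0) = 0)
    (hint : ∀ x > (0 : ℝ), Integrable (fun t => (x + t) ^ (-lam)) ρ)
    {s : ℝ} (hs : 0 ≤ s) {x : ℝ} (hx : 0 < x) :
    Integrable (fun t => (x + t) ^ (-lam - s)) ρ := by
  refine Integrable.mono' ((hint x hx).const_mul (x ^ (-s)))
    ((stmt14_meas x _).aestronglyMeasurable) ?_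
  filter_upwards [stmt14_ae hρ0] with t ht
  have hxt : 0 < x + t := by linarith
  rw [Real.norm_eq_abs, abs_of_nonneg (Real.rpow_nonneg hxt.le _)]
  have h1 : (x + t) ^ (-lam - s) = (x + t) ^ (-s) * (x + t) ^ (-lam) := by
    rw [← Real.rpow_add hxt]; ring_nf
  rw [h1]
  have h2 : (x + t) ^ (-s) ≤ x ^ (-s) :=
    Real.rpow_le_rpow_of_nonpos hx (by linarith) (by linarith)
  exact mul_le_mul_of_nonneg_right h2 (Real.rpow_nonneg hxt.le _)

/-- differentiation under the integral -/
lemma stmt14_deriv (hlam : 0 < lam) (hρ0 : ρ (Set.Iio 0) = 0)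
    (hint : ∀ x > (0 : ℝ), Integrable (fun t => (x + t) ^ (-lam)) ρ)
    {s : ℝ} (hs : 0 ≤ s) {x₀ : ℝ} (hx : 0 < x₀) :
    HasDerivAt (fun x => ∫ t, (x + t) ^ (-lam - s) ∂ρ)
      ((-lam - s) * ∫ t, (x₀ + t) ^ (-lam - (s + 1)) ∂ρ) x₀ := by
  have hε : (0 : ℝ) < x₀ / 2 := by linarith
  have key := hasDerivAt_integral_of_dominated_loc_of_deriv_le (μ := ρ)
      (F := fun x t => (x + t) ^ (-lam - s))
      (F' := fun x t => (-lam - s) * (x + t) ^ (-lam - s - 1))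
      (bound := fun t => (lam + s) * (x₀ / 2 + t) ^ (-lam - (s + 1)))
      (x₀ := x₀) (Metric.ball_mem_nhds x₀ hε)
      (Eventually.of_forall fun x => (stmt14_meas x _).aestronglyMeasurable)
      (stmt14_int hρ0 hint hs hx)
      (((stmt14_meas x₀ _).const_mul _).aestronglyMeasurable)
      ?_ ?_ ?_
  · have h2 : (fun t : ℝ => (x₀ + t) ^ (-lam - (s + 1))) =
        fun t : ℝ => (x₀ + t) ^ (-lam - s - 1) := by
      funext t; congr 1; ring
    have := key.2
    rw [MeasureTheory.integral_const_mul] at this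
    rw [h2]
    exact this
  · -- bound
    filter_upwards [stmt14_ae hρ0] with t ht
    intro x hxb
    rw [Metric.mem_ball, Real.dist_eq, abs_lt] at hxb
    have hx2 : x₀ / 2 < x := by linarith [hxb.1]
    have hxt : 0 < x + t := by linarith
    have hxt2 : 0 < x₀ / 2 + t := by linarith
    rw [show -lam - (s + 1) = -lam - s - 1 by ring, norm_mul, Real.norm_eq_abs,
      Real.norm_eq_abs, abs_of_nonneg (Real.rpow_nonneg hxt.le _),
      abs_of_nonpos (by linarith : -lam - s ≤ 0),
      show -(-lam - s) = lam + s from by ring]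
    have h2 : (x + t) ^ (-lam - s - 1) ≤ (x₀ / 2 + t) ^ (-lam - s - 1) :=
      Real.rpow_le_rpow_of_nonpos hxt2 (by linarith) (by linarith)
    exact mul_le_mul_of_nonneg_left h2 (by linarith)
  · exact (stmt14_int hρ0 hint (by linarith : (0:ℝ) ≤ s + 1) hε).const_mul _
  · -- differentiability
    filter_upwards [stmt14_ae hρ0] with t ht
    intro x hxb
    rw [Metric.mem_ball, Real.dist_eq, abs_lt] at hxb
    have hxt : 0 < x + t := by linarith [hxb.1]
    have h := (((hasDerivAt_id x).add_const t).rpow_const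
      (p := -lam - s) (Or.inl hxt.ne'))
    simpa using h

end Aux

theorem stmt14 (lam : ℝ) (hlam : 0 < lam) (f : ℝ → ℝ) (hf : IsGenStieltjes lam f) :
    ∀ x > (0 : ℝ), ∃ ν : Measure ℝ, IsFiniteMeasure ν ∧ ν (Set.Icc 0 1)ᶜ = 0 ∧
      ∀ n : ℕ,
        (-1 : ℝ) ^ n * (Real.Gamma lam / Real.Gamma ((n : ℝ) + lam)) * x ^ n *
            iteratedDerivWithin n f (Set.Ioi 0) x
          = ∫ u, u ^ n ∂ν := by
  obtain ⟨C, ρ, hC, hρ0, hint, hfval⟩ := hf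
  intro x hx
  set g : ℕ → ℝ → ℝ := fun n y => ∫ t, (y + t) ^ (-lam - (n : ℝ)) ∂ρ with hg_def
  have hgderiv : ∀ (n : ℕ) {y : ℝ}, 0 < y →
      HasDerivAt (g n) ((-lam - (n : ℝ)) * g (n + 1) y) y := by
    intro n y hy
    have h := stmt14_deriv hlam hρ0 hint (s := (n : ℝ)) (Nat.cast_nonneg n) hy
    have he : (fun t : ℝ => (y + t) ^ (-lam - ((n : ℝ) + 1)))
        = fun t : ℝ => (y + t) ^ (-lam - (((n + 1 : ℕ)) : ℝ)) := by
      funext t; congr 1; push_cast; ring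
    rw [hg_def]
    simp only [he] at h
    exact h
  set G : ℝ → ℝ := fun y => C + g 0 y with hG_def
  have key : ∀ (n : ℕ), ∀ y > (0 : ℝ), iteratedDeriv n G y =
      (if n = 0 then C else 0) + (∏ k ∈ Finset.range n, (-lam - (k : ℝ))) * g n y := by
    intro n
    induction n with
    | zero => intro y hy; simp [hG_def]
    | succ n IH =>
      intro y hy
      have hev : iteratedDeriv n G =ᶠ[nhds y]
          fun z => (if n = 0 then C else 0)
            + (∏ k ∈ Finset.range n, (-lam - (k : ℝ))) * g n z := by
        filter_upwards [isOpen_Ioi.mem_nhds hy] with z hz using IH z hz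
      rw [iteratedDeriv_succ, hev.deriv_eq]
      have hd : HasDerivAt (fun z => (if n = 0 then C else 0) +
          (∏ k ∈ Finset.range n, (-lam - (k : ℝ))) * g n z)
          ((∏ k ∈ Finset.range n, (-lam - (k : ℝ))) * ((-lam - (n : ℝ)) * g (n + 1) y)) y :=
        ((hgderiv n hy).const_mul _).const_add _
      rw [hd.deriv, Finset.prod_range_succ]
      simp only [Nat.succ_ne_zero, if_false]
      ring
  have hEq : Set.EqOn f G (Set.Ioi 0) := by
    intro y hy
    have h0 : (fun t : ℝ => (y + t) ^ (-lam - ((0 : ℕ) : ℝ)))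
        = fun t : ℝ => (y + t) ^ (-lam) := by
      funext t; norm_num
    rw [hG_def]
    simp only [hg_def, h0]
    exact hfval y hy
  have hwithin : ∀ n : ℕ, iteratedDerivWithin n f (Set.Ioi 0) x = iteratedDeriv n G x := by
    intro n
    rw [iteratedDerivWithin_congr hEq hx,
      iteratedDerivWithin_eq_iteratedFDerivWithin, iteratedDeriv_eq_iteratedFDeriv,
      iteratedFDerivWithin_of_isOpen n isOpen_Ioi hx]
  -- the measure
  set d : ℝ → ℝ≥0 := fun t => Real.toNNReal ((x + t) ^ (-lam)) with hd_def
  have hdm : Measurable d := (stmt14_meas x (-lam)).real_toNNReal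
  set μ' : Measure ℝ := ρ.withDensity (fun t => ((d t : ℝ≥0∞))) with hμ'_def
  set φ : ℝ → ℝ := fun t => x / (x + t) with hφ_def
  have hφm : Measurable φ := measurable_const.div (measurable_const.add measurable_id)
  have hμ'univ : μ' Set.univ < ⊤ := by
    rw [hμ'_def, withDensity_apply _ MeasurableSet.univ, setLIntegral_univ]
    have hco : ∀ t : ℝ, ((d t : ℝ≥0∞)) = ENNReal.ofReal ((x + t) ^ (-lam)) := fun t => rfl
    simp_rw [hco]
    exact (hint x hx).lintegral_lt_top
  refine ⟨(ENNReal.ofReal C) • Measure.dirac 0 + Measure.map φ μ', ?_, ?_, ?_⟩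
  · constructor
    rw [Measure.add_apply, Measure.smul_apply, smul_eq_mul,
      Measure.map_apply hφm MeasurableSet.univ]
    refine ENNReal.add_lt_top.2 ⟨?_, ?_⟩
    · exact ENNReal.mul_lt_top ENNReal.ofReal_lt_top (by simp)
    · simpa using hμ'univ
  · rw [Measure.add_apply, Measure.smul_apply, smul_eq_mul]
    have h0 : Measure.dirac (0 : ℝ) (Set.Icc 0 1)ᶜ = 0 := by
      rw [Measure.dirac_apply' _ measurableSet_Icc.compl]
      simp
    have hIio : μ' (Set.Iio 0) = 0 := by
      rw [hμ'_def, withDensity_apply _ measurableSet_Iio]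
      exact setLIntegral_measure_zero _ _ hρ0
    have hmap : Measure.map φ μ' (Set.Icc 0 1)ᶜ = 0 := by
      rw [Measure.map_apply hφm measurableSet_Icc.compl]
      refine le_antisymm (le_trans (measure_mono ?_) hIio.le) zero_le
      intro t ht
      simp only [Set.mem_preimage, Set.mem_compl_iff, Set.mem_Icc] at ht
      rw [Set.mem_Iio]
      by_contra hc
      push_neg at hc
      have hxt : 0 < x + t := by linarith
      exact ht ⟨div_nonneg hx.le hxt.le, (div_le_one hxt).2 (by linarith)⟩
    rw [h0, hmap, mul_zero, add_zero]
  · intro n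
    have hΓpos : 0 < Real.Gamma lam := Real.Gamma_pos_of_pos hlam
    have hGamma : ∀ m : ℕ, Real.Gamma ((m : ℝ) + lam)
        = Real.Gamma lam * ∏ k ∈ Finset.range m, (lam + (k : ℝ)) := by
      intro m
      induction m with
      | zero => simp
      | succ m IH =>
        have h1 : (((m + 1 : ℕ)) : ℝ) + lam = ((m : ℝ) + lam) + 1 := by push_cast; ring
        rw [h1, Real.Gamma_add_one (by positivity : ((m : ℝ) + lam) ≠ 0), IH,
          Finset.prod_range_succ]
        ring
    have hP : (0 : ℝ) < ∏ k ∈ Finset.range n, (lam + (k : ℝ)) :=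
      Finset.prod_pos fun k _ => by positivity
    have hsign : ∏ k ∈ Finset.range n, (-lam - (k : ℝ))
        = (-1 : ℝ) ^ n * ∏ k ∈ Finset.range n, (lam + (k : ℝ)) := by
      rw [show (fun k : ℕ => -lam - (k : ℝ)) = fun k : ℕ => (-1) * (lam + (k : ℝ)) from
        funext fun k => by ring, Finset.prod_mul_distrib, Finset.prod_const,
        Finset.card_range]
    have hL : (-1 : ℝ) ^ n * (Real.Gamma lam / Real.Gamma ((n : ℝ) + lam)) * x ^ n *
        iteratedDerivWithin n f (Set.Ioi 0) x
        = (if n = 0 then C else 0) + x ^ n * g n x := by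
      rw [hwithin n, key n x hx, hGamma n, hsign]
      by_cases hn : n = 0
      · subst hn
        simp [div_self hΓpos.ne']
      · simp only [hn, if_false]
        have hsq : ((-1 : ℝ) ^ n) * ((-1 : ℝ) ^ n) = 1 := by
          rw [← pow_add, ← two_mul, pow_mul]
          norm_num
        have hstep : (-1 : ℝ) ^ n * (Real.Gamma lam /
              (Real.Gamma lam * ∏ k ∈ Finset.range n, (lam + (k : ℝ)))) * x ^ n *
              (0 + (-1 : ℝ) ^ n * (∏ k ∈ Finset.range n, (lam + (k : ℝ))) * g n x)
            = (((-1 : ℝ) ^ n) * ((-1 : ℝ) ^ n)) *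
              ((Real.Gamma lam / (Real.Gamma lam * ∏ k ∈ Finset.range n, (lam + (k : ℝ)))) *
                (∏ k ∈ Finset.range n, (lam + (k : ℝ)))) * (x ^ n * g n x) := by
          ring
        rw [hstep, hsq, one_mul]
        have h4 : (Real.Gamma lam / (Real.Gamma lam * ∏ k ∈ Finset.range n, (lam + (k : ℝ)))) *
            (∏ k ∈ Finset.range n, (lam + (k : ℝ))) = 1 := by
          field_simp
        rw [h4, one_mul, zero_add]
    rw [hL]
    -- now compute the integral
    have hae2 : (fun t => ((d t : ℝ)) * (φ t) ^ n) =ᵐ[ρ]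
        fun t => x ^ n * (x + t) ^ (-lam - (n : ℝ)) := by
      filter_upwards [stmt14_ae hρ0] with t ht
      have hxt : 0 < x + t := by linarith
      have hc : ((d t : ℝ)) = (x + t) ^ (-lam) :=
        Real.coe_toNNReal _ (Real.rpow_nonneg hxt.le _)
      rw [hc]
      show (x + t) ^ (-lam) * (x / (x + t)) ^ n = _
      rw [div_pow, ← Real.rpow_natCast (x + t) n, div_eq_mul_inv, ← Real.rpow_neg hxt.le,
        show -lam - (n : ℝ) = -lam + (-(n : ℝ)) from by ring, Real.rpow_add hxt]
      ring
    have hint2 : Integrable (fun t => (d t) • (φ t) ^ n) ρ := by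
      have := ((stmt14_int hρ0 hint (Nat.cast_nonneg n) hx).const_mul (x ^ n)).congr hae2.symm
      simpa [NNReal.smul_def] using this
    have hpm : Measurable (fun u : ℝ => u ^ n) := by measurability
    have hImap : Integrable (fun u : ℝ => u ^ n) (Measure.map φ μ') := by
      rw [integrable_map_measure hpm.aestronglyMeasurable hφm.aemeasurable, hμ'_def]
      rw [show ((fun u : ℝ => u ^ n) ∘ φ) = fun t => (φ t) ^ n from rfl]
      exact (integrable_withDensity_iff_integrable_smul hdm).2 hint2
    have hIdirac : Integrable (fun u : ℝ => u ^ n) ((ENNReal.ofReal C) • Measure.dirac 0) := by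
      have h1 : Integrable (fun u : ℝ => u ^ n) (Measure.dirac 0) := by
        refine ⟨hpm.aestronglyMeasurable, ?_⟩
        rw [hasFiniteIntegral_def, lintegral_dirac]
        exact ENNReal.coe_lt_top
      exact h1.smul_measure ENNReal.ofReal_ne_top
    rw [integral_add_measure hIdirac hImap, integral_smul_measure, integral_dirac,
      integral_map hφm.aemeasurable hpm.aestronglyMeasurable,
      hμ'_def, integral_withDensity_eq_integral_smul hdm]
    have hR : ∫ t, (d t) • (φ t) ^ n ∂ρ = x ^ n * g n x := by
      have h5 : ∫ t, (d t) • (φ t) ^ n ∂ρ = ∫ t, x ^ n * (x + t) ^ (-lam - (n : ℝ)) ∂ρ := by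
        refine integral_congr_ae ?_
        filter_upwards [hae2] with t ht
        simpa [NNReal.smul_def] using ht
      rw [h5, MeasureTheory.integral_const_mul]
    rw [hR, ENNReal.toReal_ofReal hC, smul_eq_mul]
    by_cases hn : n = 0
    · subst hn; norm_num
    · rw [zero_pow hn, mul_zero, if_neg hn]
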